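/- Gurău's degree is additive under the connected-sum operation: for connected (D+1)-colored graphs G, K and edges e in G, f in K of the same color c, ω(G #_{e,f} K) = ω(G) + ω(K). -/

import Mathlib

open scoped Classical

structure PreGraph (D : ℕ) where
  W : Type
  B : Type
  E : Type
  [finW : Finite W]
  [finB : Finite B]
  [finE : Finite E]
  src : E → W
  tgt : E → B
  col : E → Fin D

attribute [instance] PreGraph.finW PreGraph.finB PreGraph.finE

namespace PreGraph

variable {D : ℕ}

/-- A regularly edge-colored bipartite graph: at every white (resp. black) vertex
there is exactly one incident edge of each of the `D` colors. -/
def Regular (G : PreGraph D) : Prop :=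
  (∀ w c, ∃! e, G.src e = w ∧ G.col e = c) ∧
  (∀ b c, ∃! e, G.tgt e = b ∧ G.col e = c)

/-- The simple graph on all the vertices of `G` whose edges are the edges of `G`
with color in `S`. -/
def adjOn (G : PreGraph D) (S : Set (Fin D)) : SimpleGraph (G.W ⊕ G.B) where
  Adj v w := ∃ e, G.col e ∈ S ∧
    ((v = Sum.inl (G.src e) ∧ w = Sum.inr (G.tgt e)) ∨
     (w = Sum.inl (G.src e) ∧ v = Sum.inr (G.tgt e)))
  symm := by
    constructor
    rintro v w ⟨e, hc, h⟩
    exact ⟨e, hc, h.symm⟩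
  loopless := by
    constructor
    rintro v ⟨e, hc, (⟨h1, h2⟩ | ⟨h1, h2⟩)⟩ <;> rw [h1] at h2 <;> exact Sum.inl_ne_inr h2

def Connected (G : PreGraph D) : Prop := (G.adjOn Set.univ).Connected

/-- The number of faces (connected components of the `{i,j}`-bicolored subgraph). -/
noncomputable def facesCount (G : PreGraph D) (i j : Fin D) : ℕ :=
  Nat.card ((G.adjOn {i, j}).ConnectedComponent)

/-- The total number of faces of `G` (over all unordered pairs of colors). -/
noncomputable def totalFaces (G : PreGraph D) : ℕ :=
  ∑ p ∈ Finset.univ.filter (fun p : Fin D × Fin D => p.1 < p.2), G.facesCount p.1 p.2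

/-- Number of faces of the jacket associated to a cyclic permutation `σ` of the colors:
the faces of colors `σ^q(0), σ^{q+1}(0)`. -/
noncomputable def jacketFaces (G : PreGraph (D+1)) (σ : Equiv.Perm (Fin (D+1))) : ℕ :=
  ∑ q ∈ Finset.range (D+1), G.facesCount ((σ ^ q) 0) ((σ ^ (q+1)) 0)

/-- The genus of the jacket ribbon graph associated to `σ`, via Euler's formula
`2 - 2g = V - E + F`. -/
noncomputable def jacketGenus (G : PreGraph (D+1)) (σ : Equiv.Perm (Fin (D+1))) : ℚ :=
  (2 - ((Nat.card G.W : ℚ) + (Nat.card G.B : ℚ)) + (Nat.card G.E : ℚ)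
      - (G.jacketFaces σ : ℚ)) / 2

/-- Gurău's degree: the sum of the genera of the `D!/2` jackets of `G`; each jacket
corresponds to a pair `σ, σ⁻¹` of cyclic permutations of the `D+1` colors, whence the
factor `1/2`. -/
noncomputable def gurauDegree (G : PreGraph (D+1)) : ℚ :=
  (1/2) * ∑ σ ∈ Finset.univ.filter
      (fun σ : Equiv.Perm (Fin (D+1)) => σ.IsCycle ∧ σ.support = Finset.univ),
    G.jacketGenus σ

end PreGraph

/-- The connected sum `G #_{e,f} K`: delete `e` and `f` and add two new edges
`E = (s(e), t(f))` (coded `true`) and `F = (s(f), t(e))` (coded `false`), both of the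
color of `e`. -/
noncomputable def connSum {D : ℕ} (G K : PreGraph D) (e : G.E) (f : K.E) :
    PreGraph D where
  W := G.W ⊕ K.W
  B := G.B ⊕ K.B
  E := {e' : G.E // e' ≠ e} ⊕ ({f' : K.E // f' ≠ f} ⊕ Bool)
  src := fun x => match x with
    | .inl e' => .inl (G.src e'.1)
    | .inr (.inl f') => .inr (K.src f'.1)
    | .inr (.inr true) => .inl (G.src e)
    | .inr (.inr false) => .inr (K.src f)
  tgt := fun x => match x with
    | .inl e' => .inl (G.tgt e'.1)
    | .inr (.inl f') => .inr (K.tgt f'.1)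
    | .inr (.inr true) => .inr (K.tgt f)
    | .inr (.inr false) => .inl (G.tgt e)
  col := fun x => match x with
    | .inl e' => G.col e'.1
    | .inr (.inl f') => K.col f'.1
    | .inr (.inr _) => G.col e


section AuxGurau
open SimpleGraph

section SumGraph

variable {α β : Type*}

/-- Disjoint sum of two simple graphs. -/
def sumG (A : SimpleGraph α) (B : SimpleGraph β) : SimpleGraph (α ⊕ β) where
  Adj x y := match x, y with
    | .inl u, .inl v => A.Adj u v
    | .inr u, .inr v => B.Adj u v
    | _, _ => False
  symm := by constructor; rintro (u|u) (v|v) h <;> simp_all <;> exact h.symm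
  loopless := by constructor; rintro (u|u) h <;> simp_all

variable {A : SimpleGraph α} {B : SimpleGraph β}

@[simp] lemma sumG_adj_ll {u v : α} : (sumG A B).Adj (.inl u) (.inl v) ↔ A.Adj u v := Iff.rfl
@[simp] lemma sumG_adj_rr {u v : β} : (sumG A B).Adj (.inr u) (.inr v) ↔ B.Adj u v := Iff.rfl
@[simp] lemma sumG_adj_lr {u : α} {v : β} : ¬ (sumG A B).Adj (.inl u) (.inr v) := fun h => h
@[simp] lemma sumG_adj_rl {u : β} {v : α} : ¬ (sumG A B).Adj (.inr u) (.inl v) := fun h => h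

lemma sumG_walk : ∀ {x y : α ⊕ β}, (sumG A B).Walk x y →
    (∃ u v, x = .inl u ∧ y = .inl v ∧ A.Reachable u v) ∨
    (∃ u v, x = .inr u ∧ y = .inr v ∧ B.Reachable u v) := by
  intro x y w
  induction w with
  | @nil z =>
    rcases z with u | u
    · exact Or.inl ⟨u, u, rfl, rfl, Reachable.refl u⟩
    · exact Or.inr ⟨u, u, rfl, rfl, Reachable.refl u⟩
  | @cons x m y hadj p ih =>
    rcases x with u | u <;> rcases m with v | v
    · rcases ih with ⟨v', y', hv, hy, hr⟩ | ⟨v', y', hv, hy, hr⟩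
      · cases hv
        exact Or.inl ⟨u, y', rfl, hy, ((sumG_adj_ll.mp hadj).reachable).trans hr⟩
      · cases hv
    · exact absurd hadj sumG_adj_lr
    · exact absurd hadj sumG_adj_rl
    · rcases ih with ⟨v', y', hv, hy, hr⟩ | ⟨v', y', hv, hy, hr⟩
      · cases hv
      · cases hv
        exact Or.inr ⟨u, y', rfl, hy, ((sumG_adj_rr.mp hadj).reachable).trans hr⟩

lemma sumG_reach {x y : α ⊕ β} (h : (sumG A B).Reachable x y) :
    (∃ u v, x = .inl u ∧ y = .inl v ∧ A.Reachable u v) ∨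
    (∃ u v, x = .inr u ∧ y = .inr v ∧ B.Reachable u v) := by
  obtain ⟨w⟩ := h
  exact sumG_walk w

lemma sumG_reach_ll {u v : α} : (sumG A B).Reachable (.inl u) (.inl v) ↔ A.Reachable u v := by
  constructor
  · intro h
    rcases sumG_reach h with ⟨u', v', hu, hv, hr⟩ | ⟨u', v', hu, hv, hr⟩
    · cases hu; cases hv; exact hr
    · cases hu
  · intro ⟨w⟩
    refine ⟨w.map ⟨Sum.inl, ?_⟩⟩
    intro a b hab
    exact hab

lemma sumG_reach_rr {u v : β} : (sumG A B).Reachable (.inr u) (.inr v) ↔ B.Reachable u v := by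
  constructor
  · intro h
    rcases sumG_reach h with ⟨u', v', hu, hv, hr⟩ | ⟨u', v', hu, hv, hr⟩
    · cases hu
    · cases hu; cases hv; exact hr
  · intro ⟨w⟩
    refine ⟨w.map ⟨Sum.inr, ?_⟩⟩
    intro a b hab
    exact hab

lemma sumG_not_reach_lr {u : α} {v : β} : ¬ (sumG A B).Reachable (.inl u) (.inr v) := by
  intro h
  rcases sumG_reach h with ⟨u', v', hu, hv, _⟩ | ⟨u', v', hu, hv, _⟩
  · cases hv
  · cases hu

/-- Components of a disjoint sum. -/
noncomputable def sumG_cc_equiv :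
    (sumG A B).ConnectedComponent ≃ A.ConnectedComponent ⊕ B.ConnectedComponent where
  toFun := Quot.lift (Sum.elim (fun u => .inl (A.connectedComponentMk u))
      (fun u => .inr (B.connectedComponentMk u))) (by
    rintro (u|u) (v|v) h
    · simp [ConnectedComponent.sound (sumG_reach_ll.mp h)]
    · exact absurd h sumG_not_reach_lr
    · exact absurd h.symm sumG_not_reach_lr
    · simp [ConnectedComponent.sound (sumG_reach_rr.mp h)])
  invFun := Sum.elim
    (Quot.lift (fun u => (sumG A B).connectedComponentMk (.inl u))
      (fun u v h => ConnectedComponent.sound (sumG_reach_ll.mpr h)))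
    (Quot.lift (fun u => (sumG A B).connectedComponentMk (.inr u))
      (fun u v h => ConnectedComponent.sound (sumG_reach_rr.mpr h)))
  left_inv := by
    refine ConnectedComponent.ind ?_
    rintro (u|u) <;> rfl
  right_inv := by
    rintro (c|c) <;> refine ConnectedComponent.ind (fun u => rfl) c

instance cc_finite {γ : Type*} [Finite γ] (G : SimpleGraph γ) :
    Finite G.ConnectedComponent :=
  Finite.of_surjective G.connectedComponentMk Quot.mk_surjective

lemma card_cc_sumG [Finite α] [Finite β] :
    Nat.card (sumG A B).ConnectedComponent
      = Nat.card A.ConnectedComponent + Nat.card B.ConnectedComponent := by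
  rw [Nat.card_congr (sumG_cc_equiv), Nat.card_sum]

end SumGraph

section AddEdge

variable {V : Type*} {Gr Gr' : SimpleGraph V} {a b : V}

/-- Reachability after adding the edge `a-b`. -/
lemma addEdge_reach
    (hA : ∀ v w, Gr'.Adj v w ↔ Gr.Adj v w ∨ (v = a ∧ w = b) ∨ (v = b ∧ w = a))
    {v w : V} (h : Gr'.Reachable v w) :
    Gr.Reachable v w ∨ (Gr.Reachable v a ∧ Gr.Reachable b w) ∨
      (Gr.Reachable v b ∧ Gr.Reachable a w) := by
  obtain ⟨p⟩ := h
  induction p with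
  | nil => exact Or.inl (Reachable.refl _)
  | @cons x m y hadj p ih =>
    rcases (hA _ _).mp hadj with h' | ⟨rfl, rfl⟩ | ⟨rfl, rfl⟩
    · rcases ih with hr | ⟨h1, h2⟩ | ⟨h1, h2⟩
      · exact Or.inl (h'.reachable.trans hr)
      · exact Or.inr (Or.inl ⟨h'.reachable.trans h1, h2⟩)
      · exact Or.inr (Or.inr ⟨h'.reachable.trans h1, h2⟩)
    · rcases ih with hr | ⟨h1, h2⟩ | ⟨h1, h2⟩
      · exact Or.inr (Or.inl ⟨Reachable.refl _, hr⟩)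
      · exact Or.inl (h1.symm.trans h2)
      · exact Or.inl h2
    · rcases ih with hr | ⟨h1, h2⟩ | ⟨h1, h2⟩
      · exact Or.inr (Or.inr ⟨Reachable.refl _, hr⟩)
      · exact Or.inl h2
      · exact Or.inl (h1.symm.trans h2)

lemma addEdge_le
    (hA : ∀ v w, Gr'.Adj v w ↔ Gr.Adj v w ∨ (v = a ∧ w = b) ∨ (v = b ∧ w = a)) :
    Gr ≤ Gr' := fun v w h => (hA v w).mpr (Or.inl h)

/-- Adding an edge between two vertices already connected does not change the
component count. -/
lemma card_cc_addEdge_eq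
    (hA : ∀ v w, Gr'.Adj v w ↔ Gr.Adj v w ∨ (v = a ∧ w = b) ∨ (v = b ∧ w = a))
    (hab : Gr.Reachable a b) :
    Nat.card Gr'.ConnectedComponent = Nat.card Gr.ConnectedComponent := by
  refine Nat.card_congr ?_
  refine ⟨Quot.lift Gr.connectedComponentMk ?_, Quot.lift Gr'.connectedComponentMk ?_, ?_, ?_⟩
  · intro v w h
    rcases addEdge_reach hA h with hr | ⟨h1, h2⟩ | ⟨h1, h2⟩
    · exact ConnectedComponent.sound hr
    · exact ConnectedComponent.sound ((h1.trans hab).trans h2)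
    · exact ConnectedComponent.sound ((h1.trans hab.symm).trans h2)
  · exact fun v w h => ConnectedComponent.sound (h.mono (addEdge_le hA))
  · exact ConnectedComponent.ind fun v => rfl
  · exact ConnectedComponent.ind fun v => rfl

/-- Adding an edge between two vertices in different components merges exactly two
components. -/
lemma card_cc_addEdge_split [Finite V]
    (hA : ∀ v w, Gr'.Adj v w ↔ Gr.Adj v w ∨ (v = a ∧ w = b) ∨ (v = b ∧ w = a))
    (hab : ¬ Gr.Reachable a b) :
    Nat.card Gr.ConnectedComponent = Nat.card Gr'.ConnectedComponent + 1 := by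
  have hmkne : Gr.connectedComponentMk a ≠ Gr.connectedComponentMk b :=
    fun h => hab (ConnectedComponent.exact h)
  classical
  set ψ : V → Gr.ConnectedComponent := fun v =>
    if Gr.Reachable b v then Gr.connectedComponentMk a else Gr.connectedComponentMk v with hψ
  have hψ_sound : ∀ v w, Gr'.Reachable v w → ψ v = ψ w := by
    intro v w h
    rcases addEdge_reach hA h with hr | ⟨h1, h2⟩ | ⟨h1, h2⟩
    · by_cases hbv : Gr.Reachable b v
      · simp only [hψ, if_pos hbv, if_pos (hbv.trans hr)]
      · simp only [hψ, if_neg hbv, if_neg (fun hbw : Gr.Reachable b w => hbv (hbw.trans hr.symm)),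
          ConnectedComponent.eq]
        exact hr
    · have hbv : ¬ Gr.Reachable b v := fun hbv => hab (hbv.trans h1).symm
      simp only [hψ, if_neg hbv, if_pos h2, ConnectedComponent.eq]
      exact h1
    · have hbw : ¬ Gr.Reachable b w := fun hbw => hab (h2.trans hbw.symm)
      simp only [hψ, if_pos h1.symm, if_neg hbw, ConnectedComponent.eq]
      exact h2
  have hψ_ne : ∀ v, ψ v ≠ Gr.connectedComponentMk b := by
    intro v
    by_cases hbv : Gr.Reachable b v
    · simp only [hψ, if_pos hbv]; exact hmkne
    · simp only [hψ, if_neg hbv, Ne, ConnectedComponent.eq]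
      exact fun h => hbv h.symm
  have key : Nat.card {p : Gr.ConnectedComponent // p ≠ Gr.connectedComponentMk b}
      = Nat.card Gr'.ConnectedComponent := by
    refine Nat.card_congr
      ⟨fun p => Quot.lift Gr'.connectedComponentMk
        (fun v w h => ConnectedComponent.sound (h.mono (addEdge_le hA))) p.1,
       fun q => ⟨Quot.lift ψ hψ_sound q, ?_⟩, ?_, ?_⟩
    · induction q using ConnectedComponent.ind with
      | _ v => exact hψ_ne v
    · rintro ⟨p, hp⟩
      refine Subtype.ext ?_
      revert hp
      induction p using ConnectedComponent.ind with
      | _ v =>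
        intro hp
        show ψ v = Gr.connectedComponentMk v
        have hbv : ¬ Gr.Reachable b v := fun h => hp (ConnectedComponent.sound h.symm)
        simp only [hψ, if_neg hbv]
    · intro q
      induction q using ConnectedComponent.ind with
      | _ v =>
        show Quot.lift Gr'.connectedComponentMk _ (ψ v) = Gr'.connectedComponentMk v
        by_cases hbv : Gr.Reachable b v
        · simp only [hψ, if_pos hbv]
          show Gr'.connectedComponentMk a = Gr'.connectedComponentMk v
          refine ConnectedComponent.sound ?_
          have hab' : Gr'.Adj a b := (hA a b).mpr (Or.inr (Or.inl ⟨rfl, rfl⟩))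
          exact (hab'.reachable).trans (hbv.mono (addEdge_le hA))
        · simp only [hψ, if_neg hbv]
          rfl
  rw [← key]
  haveI := Fintype.ofFinite Gr.ConnectedComponent
  haveI := Fintype.ofFinite {p : Gr.ConnectedComponent // p ≠ Gr.connectedComponentMk b}
  rw [← Nat.card_congr (Equiv.optionSubtypeNe (Gr.connectedComponentMk b))]
  simp [Nat.card_eq_fintype_card, Fintype.card_option]

end AddEdge

/-- Four-way commutativity with good definitional reduction. -/
def quadComm (α β γ δ : Type*) : (α ⊕ β) ⊕ (γ ⊕ δ) ≃ (α ⊕ γ) ⊕ (β ⊕ δ) where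
  toFun x := match x with
    | .inl (.inl a) => .inl (.inl a)
    | .inl (.inr b) => .inr (.inl b)
    | .inr (.inl c) => .inl (.inr c)
    | .inr (.inr d) => .inr (.inr d)
  invFun x := match x with
    | .inl (.inl a) => .inl (.inl a)
    | .inr (.inl b) => .inl (.inr b)
    | .inl (.inr c) => .inr (.inl c)
    | .inr (.inr d) => .inr (.inr d)
  left_inv x := by rcases x with (a | b) | (c | d) <;> rfl
  right_inv x := by rcases x with (a | c) | (b | d) <;> rfl

lemma card_cc_of_iso {V V' : Type*} (φ : V ≃ V') {Gr : SimpleGraph V} {Gr' : SimpleGraph V'}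
    (h : ∀ v w, Gr.Adj v w ↔ Gr'.Adj (φ v) (φ w)) :
    Nat.card Gr.ConnectedComponent = Nat.card Gr'.ConnectedComponent :=
  Nat.card_congr (SimpleGraph.Iso.connectedComponentEquiv ⟨φ, fun {v w} => (h v w).symm⟩)


/-- Pullback of a graph along an equivalence of vertex types. -/
def pullG {V V' : Type*} (Gr : SimpleGraph V) (φ : V' ≃ V) : SimpleGraph V' where
  Adj v w := Gr.Adj (φ v) (φ w)
  symm := ⟨fun v w (h : Gr.Adj (φ v) (φ w)) => h.symm⟩
  loopless := ⟨fun v h => Gr.loopless.irrefl _ h⟩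

lemma card_cc_pullG {V V' : Type*} (Gr : SimpleGraph V) (φ : V' ≃ V) :
    Nat.card (pullG Gr φ).ConnectedComponent = Nat.card Gr.ConnectedComponent :=
  card_cc_of_iso φ (fun _ _ => Iff.rfl)

/-- Adding one edge to a graph. -/
def addE {V : Type*} (Gr : SimpleGraph V) (a b : V) (hab : a ≠ b) : SimpleGraph V where
  Adj v w := Gr.Adj v w ∨ (v = a ∧ w = b) ∨ (v = b ∧ w = a)
  symm := by
    constructor
    rintro v w (h | ⟨rfl, rfl⟩ | ⟨rfl, rfl⟩)
    · exact Or.inl h.symm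
    · exact Or.inr (Or.inr ⟨rfl, rfl⟩)
    · exact Or.inr (Or.inl ⟨rfl, rfl⟩)
  loopless := by
    constructor
    rintro v (h | ⟨rfl, rfl⟩ | ⟨rfl, rfl⟩)
    · exact Gr.loopless.irrefl v h
    · exact hab rfl
    · exact hab rfl

lemma addE_adj {V : Type*} (Gr : SimpleGraph V) (a b : V) (hab : a ≠ b) :
    ∀ v w, (addE Gr a b hab).Adj v w ↔ Gr.Adj v w ∨ (v = a ∧ w = b) ∨ (v = b ∧ w = a) :=
  fun _ _ => Iff.rfl

namespace PreGraph

variable {D : ℕ}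

/-- The graph `adjOn` with one edge deleted. -/
def delG (G : PreGraph D) (e : G.E) (S : Set (Fin D)) : SimpleGraph (G.W ⊕ G.B) where
  Adj v w := ∃ e', e' ≠ e ∧ G.col e' ∈ S ∧
    ((v = Sum.inl (G.src e') ∧ w = Sum.inr (G.tgt e')) ∨
     (w = Sum.inl (G.src e') ∧ v = Sum.inr (G.tgt e')))
  symm := by constructor; rintro v w ⟨e', hne, hc, h⟩; exact ⟨e', hne, hc, h.symm⟩
  loopless := by
    constructor
    rintro v ⟨e', hne, hc, (⟨h1, h2⟩ | ⟨h1, h2⟩)⟩ <;> rw [h1] at h2 <;> exact Sum.inl_ne_inr h2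

lemma adjOn_iff_delG (G : PreGraph D) (e : G.E) (S : Set (Fin D)) (hce : G.col e ∈ S) :
    ∀ v w, (G.adjOn S).Adj v w ↔ (G.delG e S).Adj v w ∨
      (v = Sum.inl (G.src e) ∧ w = Sum.inr (G.tgt e)) ∨
      (v = Sum.inr (G.tgt e) ∧ w = Sum.inl (G.src e)) := by
  intro v w
  constructor
  · rintro ⟨e', hc, h⟩
    by_cases he : e' = e
    · subst he
      rcases h with h | h
      · exact Or.inr (Or.inl h)
      · exact Or.inr (Or.inr ⟨h.2, h.1⟩)
    · exact Or.inl ⟨e', he, hc, h⟩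
  · rintro (⟨e', _, hc, h⟩ | h | h)
    · exact ⟨e', hc, h⟩
    · exact ⟨e, hce, Or.inl h⟩
    · exact ⟨e, hce, Or.inr ⟨h.2, h.1⟩⟩

/-- In a regular graph, after deleting an edge `e` whose color lies in `{i, j}`, its two
endpoints remain connected by the rest of the `{i,j}`-bicolored cycle through `e`.
Proved by a parity (handshake) argument. -/
lemma delG_reach (G : PreGraph D) (hreg : G.Regular) {i j : Fin D} (hij : i ≠ j) (e : G.E)
    (hce : G.col e ∈ ({i, j} : Set (Fin D))) :
    (G.delG e {i, j}).Reachable (Sum.inl (G.src e)) (Sum.inr (G.tgt e)) := by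
  classical
  by_contra hnr
  haveI := Fintype.ofFinite G.E
  haveI := Fintype.ofFinite G.W
  haveI := Fintype.ofFinite G.B
  set H := G.delG e {i, j} with hH
  set a : G.W ⊕ G.B := Sum.inl (G.src e) with ha
  set b : G.W ⊕ G.B := Sum.inr (G.tgt e) with hb
  set A : Finset (G.W ⊕ G.B) := Finset.univ.filter (fun v => H.Reachable a v) with hA
  have haA : a ∈ A := by
    simp only [hA, Finset.mem_filter, Finset.mem_univ, true_and]
    exact SimpleGraph.Reachable.refl a
  have hbA : b ∉ A := by
    simp only [hA, Finset.mem_filter, Finset.mem_univ, true_and]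
    exact hnr
  have hclosed : ∀ v w, H.Adj v w → (v ∈ A ↔ w ∈ A) := by
    intro v w hvw
    simp only [hA, Finset.mem_filter, Finset.mem_univ, true_and]
    exact ⟨fun h => h.trans hvw.reachable, fun h => h.trans hvw.symm.reachable⟩
  set Ed : Finset G.E := Finset.univ.filter
      (fun e' => e' ≠ e ∧ G.col e' ∈ ({i, j} : Set (Fin D))) with hEd
  -- the white count
  have white_count : ∀ w : G.W,
      (Ed.filter (fun e' => G.src e' = w)).card = if G.src e = w then 1 else 2 := by
    intro w
    obtain ⟨ei, ⟨hsi, hci⟩, hui⟩ := hreg.1 w i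
    obtain ⟨ej, ⟨hsj, hcj⟩, huj⟩ := hreg.1 w j
    have hne : ei ≠ ej := fun h => hij (by rw [← hci, h, hcj])
    have hset : Finset.univ.filter
        (fun e' => G.col e' ∈ ({i, j} : Set (Fin D)) ∧ G.src e' = w) = {ei, ej} := by
      ext e'
      simp only [Finset.mem_filter, Finset.mem_univ, true_and, Finset.mem_insert,
        Finset.mem_singleton, Set.mem_insert_iff, Set.mem_singleton_iff]
      constructor
      · rintro ⟨hcol | hcol, hsrc⟩
        · exact Or.inl (hui e' ⟨hsrc, hcol⟩)
        · exact Or.inr (huj e' ⟨hsrc, hcol⟩)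
      · rintro (rfl | rfl)
        · exact ⟨Or.inl hci, hsi⟩
        · exact ⟨Or.inr hcj, hsj⟩
    have hre : Ed.filter (fun e' => G.src e' = w)
        = (Finset.univ.filter
            (fun e' => G.col e' ∈ ({i, j} : Set (Fin D)) ∧ G.src e' = w)).erase e := by
      rw [← Finset.filter_ne']
      rw [hEd]
      rw [Finset.filter_filter, Finset.filter_filter]
      apply Finset.filter_congr
      intro x _
      tauto
    rw [hre, hset]
    have hcard2 : ({ei, ej} : Finset G.E).card = 2 := by
      rw [Finset.card_insert_of_notMem (by simpa using hne), Finset.card_singleton]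
    by_cases hsw : G.src e = w
    · have hmem : e ∈ ({ei, ej} : Finset G.E) := by
        rcases hce with hcol | hcol
        · simp [hui e ⟨hsw, hcol⟩]
        · simp [huj e ⟨hsw, hcol⟩]
      rw [if_pos hsw, Finset.card_erase_of_mem hmem, hcard2]
    · have hmem : e ∉ ({ei, ej} : Finset G.E) := by
        simp only [Finset.mem_insert, Finset.mem_singleton]
        rintro (rfl | rfl)
        · exact hsw hsi
        · exact hsw hsj
      rw [if_neg hsw, Finset.erase_eq_of_notMem hmem, hcard2]
  -- the black count
  have black_count : ∀ bb : G.B,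
      (Ed.filter (fun e' => G.tgt e' = bb)).card = if G.tgt e = bb then 1 else 2 := by
    intro bb
    obtain ⟨ei, ⟨hsi, hci⟩, hui⟩ := hreg.2 bb i
    obtain ⟨ej, ⟨hsj, hcj⟩, huj⟩ := hreg.2 bb j
    have hne : ei ≠ ej := fun h => hij (by rw [← hci, h, hcj])
    have hset : Finset.univ.filter
        (fun e' => G.col e' ∈ ({i, j} : Set (Fin D)) ∧ G.tgt e' = bb) = {ei, ej} := by
      ext e'
      simp only [Finset.mem_filter, Finset.mem_univ, true_and, Finset.mem_insert,
        Finset.mem_singleton, Set.mem_insert_iff, Set.mem_singleton_iff]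
      constructor
      · rintro ⟨hcol | hcol, hsrc⟩
        · exact Or.inl (hui e' ⟨hsrc, hcol⟩)
        · exact Or.inr (huj e' ⟨hsrc, hcol⟩)
      · rintro (rfl | rfl)
        · exact ⟨Or.inl hci, hsi⟩
        · exact ⟨Or.inr hcj, hsj⟩
    have hre : Ed.filter (fun e' => G.tgt e' = bb)
        = (Finset.univ.filter
            (fun e' => G.col e' ∈ ({i, j} : Set (Fin D)) ∧ G.tgt e' = bb)).erase e := by
      rw [← Finset.filter_ne']
      rw [hEd]
      rw [Finset.filter_filter, Finset.filter_filter]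
      apply Finset.filter_congr
      intro x _
      tauto
    rw [hre, hset]
    have hcard2 : ({ei, ej} : Finset G.E).card = 2 := by
      rw [Finset.card_insert_of_notMem (by simpa using hne), Finset.card_singleton]
    by_cases hsw : G.tgt e = bb
    · have hmem : e ∈ ({ei, ej} : Finset G.E) := by
        rcases hce with hcol | hcol
        · simp [hui e ⟨hsw, hcol⟩]
        · simp [huj e ⟨hsw, hcol⟩]
      rw [if_pos hsw, Finset.card_erase_of_mem hmem, hcard2]
    · have hmem : e ∉ ({ei, ej} : Finset G.E) := by
        simp only [Finset.mem_insert, Finset.mem_singleton]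
        rintro (rfl | rfl)
        · exact hsw hsi
        · exact hsw hsj
      rw [if_neg hsw, Finset.erase_eq_of_notMem hmem, hcard2]
  -- double counting
  set N : ℕ := ∑ e' ∈ Ed, (A.filter (fun v => v = Sum.inl (G.src e') ∨ v = Sum.inr (G.tgt e'))).card
    with hN
  -- each edge term is 0 or 2
  have heven : 2 ∣ N := by
    refine Finset.dvd_sum ?_
    intro e' he'
    simp only [hEd, Finset.mem_filter, Finset.mem_univ, true_and] at he'
    have hadj : H.Adj (Sum.inl (G.src e')) (Sum.inr (G.tgt e')) :=
      ⟨e', he'.1, he'.2, Or.inl ⟨rfl, rfl⟩⟩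
    have hiff := hclosed _ _ hadj
    have : A.filter (fun v => v = Sum.inl (G.src e') ∨ v = Sum.inr (G.tgt e'))
        = if Sum.inl (G.src e') ∈ A then {Sum.inl (G.src e'), Sum.inr (G.tgt e')} else ∅ := by
      split_ifs with hin
      · ext v
        simp only [Finset.mem_filter, Finset.mem_insert, Finset.mem_singleton]
        constructor
        · rintro ⟨_, h⟩; exact h
        · rintro (rfl | rfl)
          · exact ⟨hin, Or.inl rfl⟩
          · exact ⟨hiff.mp hin, Or.inr rfl⟩
      · ext v
        simp only [Finset.mem_filter, Finset.notMem_empty, iff_false, not_and, not_or]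
        intro hv
        constructor
        · rintro rfl; exact absurd hv hin
        · rintro rfl; exact absurd (hiff.mpr hv) hin
    rw [this]
    split_ifs with hin
    · rw [Finset.card_insert_of_notMem (by simp), Finset.card_singleton]
    · simp
  -- vertex side
  have hswap : N = ∑ v ∈ A, (Ed.filter
      (fun e' => v = Sum.inl (G.src e') ∨ v = Sum.inr (G.tgt e'))).card := by
    rw [hN]
    simp only [Finset.card_filter]
    rw [Finset.sum_comm]
  have hvertex : ∀ v ∈ A, (Ed.filter
      (fun e' => v = Sum.inl (G.src e') ∨ v = Sum.inr (G.tgt e'))).card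
      = if v = a then 1 else 2 := by
    rintro (w | bb) hv
    · have : Ed.filter (fun e' => (Sum.inl w : G.W ⊕ G.B) = Sum.inl (G.src e') ∨ (Sum.inl w : G.W ⊕ G.B) = Sum.inr (G.tgt e'))
          = Ed.filter (fun e' => G.src e' = w) := by
        apply Finset.filter_congr
        intro e' _
        simp [eq_comm, Sum.inl.injEq]
      rw [this, white_count w]
      have : (Sum.inl w : G.W ⊕ G.B) = a ↔ G.src e = w := by
        rw [ha]; simp [eq_comm]
      by_cases hsw : G.src e = w
      · rw [if_pos hsw, if_pos (this.mpr hsw)]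
      · rw [if_neg hsw, if_neg (fun h => hsw (this.mp h))]
    · have : Ed.filter (fun e' => (Sum.inr bb : G.W ⊕ G.B) = Sum.inl (G.src e') ∨ (Sum.inr bb : G.W ⊕ G.B) = Sum.inr (G.tgt e'))
          = Ed.filter (fun e' => G.tgt e' = bb) := by
        apply Finset.filter_congr
        intro e' _
        simp [eq_comm, Sum.inr.injEq]
      rw [this, black_count bb]
      have hne : G.tgt e ≠ bb := by
        rintro rfl
        exact hbA hv
      rw [if_neg hne, if_neg (show ¬((Sum.inr bb : G.W ⊕ G.B) = a) from fun h => Sum.inr_ne_inl (h.trans ha))]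
  have hNval : N + 1 = 2 * A.card := by
    rw [hswap]
    rw [Finset.sum_congr rfl hvertex]
    rw [← Finset.add_sum_erase _ _ haA]
    rw [if_pos rfl]
    have : ∀ v ∈ A.erase a, (if v = a then 1 else 2) = 2 := by
      intro v hv
      rw [if_neg (Finset.ne_of_mem_erase hv)]
    rw [Finset.sum_congr rfl this, Finset.sum_const, smul_eq_mul,
      Finset.card_erase_of_mem haA]
    have hpos : 1 ≤ A.card := Finset.card_pos.mpr ⟨a, haA⟩
    omega
  omega

/-- The key face-count relation for the connected sum. -/
lemma facesCount_connSum (G K : PreGraph D) (hGreg : G.Regular) (hKreg : K.Regular)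
    (e : G.E) (f : K.E) (hcol : G.col e = K.col f) (i j : Fin D) (hij : i ≠ j) :
    (connSum G K e f).facesCount i j
        + (if G.col e ∈ ({i, j} : Set (Fin D)) then 1 else 0)
      = G.facesCount i j + K.facesCount i j := by
  classical
  set θ : ((G.W ⊕ K.W) ⊕ (G.B ⊕ K.B)) ≃ ((G.W ⊕ G.B) ⊕ (K.W ⊕ K.B)) :=
    quadComm G.W K.W G.B K.B with hθ
  set T : SimpleGraph ((G.W ⊕ G.B) ⊕ (K.W ⊕ K.B)) :=
    pullG ((connSum G K e f).adjOn {i, j}) θ.symm with hT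
  have hfT : (connSum G K e f).facesCount i j = Nat.card T.ConnectedComponent :=
    (card_cc_pullG _ _).symm
  by_cases hc : G.col e ∈ ({i, j} : Set (Fin D))
  · -- the color of the modified edges is one of the two face colors
    have hcf : K.col f ∈ ({i, j} : Set (Fin D)) := hcol ▸ hc
    set a1 : (G.W ⊕ G.B) ⊕ (K.W ⊕ K.B) := Sum.inl (Sum.inl (G.src e)) with ha1
    set b1 : (G.W ⊕ G.B) ⊕ (K.W ⊕ K.B) := Sum.inl (Sum.inr (G.tgt e)) with hb1
    set a2 : (G.W ⊕ G.B) ⊕ (K.W ⊕ K.B) := Sum.inr (Sum.inl (K.src f)) with ha2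
    set b2 : (G.W ⊕ G.B) ⊕ (K.W ⊕ K.B) := Sum.inr (Sum.inr (K.tgt f)) with hb2
    set S0 : SimpleGraph ((G.W ⊕ G.B) ⊕ (K.W ⊕ K.B)) :=
      sumG (G.delG e {i, j}) (K.delG f {i, j}) with hS0
    have h12 : a1 ≠ b2 := by simp [ha1, hb2]
    set S1 : SimpleGraph ((G.W ⊕ G.B) ⊕ (K.W ⊕ K.B)) := addE S0 a1 b2 h12 with hS1
    -- characterization of T in terms of S1 plus the second bridge edge
    have hTS1 : ∀ v w, T.Adj v w ↔ S1.Adj v w ∨ (v = a2 ∧ w = b1) ∨ (v = b1 ∧ w = a2) := by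
      intro v w
      constructor
      · rintro ⟨(⟨e', hne⟩ | (⟨f', hnf⟩ | bb)), hcx, (⟨hv, hw⟩ | ⟨hw, hv⟩)⟩ <;>
          erw [Equiv.symm_apply_eq] at hv hw <;> subst hv <;> subst hw
        · exact Or.inl (Or.inl (sumG_adj_ll.mpr ⟨e', hne, hcx, Or.inl ⟨rfl, rfl⟩⟩))
        · exact Or.inl (Or.inl (sumG_adj_ll.mpr ⟨e', hne, hcx, Or.inr ⟨rfl, rfl⟩⟩))
        · exact Or.inl (Or.inl (sumG_adj_rr.mpr ⟨f', hnf, hcx, Or.inl ⟨rfl, rfl⟩⟩))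
        · exact Or.inl (Or.inl (sumG_adj_rr.mpr ⟨f', hnf, hcx, Or.inr ⟨rfl, rfl⟩⟩))
        · cases bb
          · exact Or.inr (Or.inl ⟨rfl, rfl⟩)
          · exact Or.inl (Or.inr (Or.inl ⟨rfl, rfl⟩))
        · cases bb
          · exact Or.inr (Or.inr ⟨rfl, rfl⟩)
          · exact Or.inl (Or.inr (Or.inr ⟨rfl, rfl⟩))
      · rintro ((hS | (⟨rfl, rfl⟩ | ⟨rfl, rfl⟩)) | (⟨rfl, rfl⟩ | ⟨rfl, rfl⟩))
        · rcases v with u | u <;> rcases w with u' | u'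
          · obtain ⟨e', hne, hce', (⟨rfl, rfl⟩ | ⟨rfl, rfl⟩)⟩ := hS
            · exact ⟨Sum.inl ⟨e', hne⟩, hce', Or.inl ⟨rfl, rfl⟩⟩
            · exact ⟨Sum.inl ⟨e', hne⟩, hce', Or.inr ⟨rfl, rfl⟩⟩
          · exact absurd hS sumG_adj_lr
          · exact absurd hS sumG_adj_rl
          · obtain ⟨f', hnf, hcf', (⟨rfl, rfl⟩ | ⟨rfl, rfl⟩)⟩ := hS
            · exact ⟨Sum.inr (Sum.inl ⟨f', hnf⟩), hcf', Or.inl ⟨rfl, rfl⟩⟩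
            · exact ⟨Sum.inr (Sum.inl ⟨f', hnf⟩), hcf', Or.inr ⟨rfl, rfl⟩⟩
        · exact ⟨Sum.inr (Sum.inr true), hc, Or.inl ⟨rfl, rfl⟩⟩
        · exact ⟨Sum.inr (Sum.inr true), hc, Or.inr ⟨rfl, rfl⟩⟩
        · exact ⟨Sum.inr (Sum.inr false), hc, Or.inl ⟨rfl, rfl⟩⟩
        · exact ⟨Sum.inr (Sum.inr false), hc, Or.inr ⟨rfl, rfl⟩⟩
    -- reachability facts
    have hreachG : (G.delG e {i, j}).Reachable (Sum.inl (G.src e)) (Sum.inr (G.tgt e)) :=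
      G.delG_reach hGreg hij e hc
    have hreachK : (K.delG f {i, j}).Reachable (Sum.inl (K.src f)) (Sum.inr (K.tgt f)) :=
      K.delG_reach hKreg hij f hcf
    have hS0le : S0 ≤ S1 := fun v w h => Or.inl h
    have hstep1 : Nat.card S0.ConnectedComponent = Nat.card S1.ConnectedComponent + 1 := by
      refine card_cc_addEdge_split (addE_adj S0 a1 b2 h12) ?_
      exact sumG_not_reach_lr
    have hstep2 : Nat.card T.ConnectedComponent = Nat.card S1.ConnectedComponent := by
      refine card_cc_addEdge_eq hTS1 ?_
      -- S1.Reachable a2 b1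
      have h1 : S1.Reachable a2 b2 := (sumG_reach_rr.mpr hreachK).mono hS0le
      have h2 : S1.Reachable b2 a1 := (S1.adj_symm (Or.inr (Or.inl ⟨rfl, rfl⟩))).reachable
      have h3 : S1.Reachable a1 b1 := (sumG_reach_ll.mpr hreachG).mono hS0le
      exact (h1.trans h2).trans h3
    have hdelG : Nat.card (G.adjOn {i, j}).ConnectedComponent
        = Nat.card (G.delG e {i, j}).ConnectedComponent :=
      card_cc_addEdge_eq (G.adjOn_iff_delG e {i, j} hc) hreachG
    have hdelK : Nat.card (K.adjOn {i, j}).ConnectedComponent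
        = Nat.card (K.delG f {i, j}).ConnectedComponent :=
      card_cc_addEdge_eq (K.adjOn_iff_delG f {i, j} hcf) hreachK
    have hsum : Nat.card S0.ConnectedComponent
        = Nat.card (G.delG e {i, j}).ConnectedComponent
          + Nat.card (K.delG f {i, j}).ConnectedComponent := card_cc_sumG
    rw [if_pos hc, hfT, hstep2]
    unfold facesCount
    rw [hdelG, hdelK]
    omega
  · -- the color of the modified edges is not a face color
    have hcf : K.col f ∉ ({i, j} : Set (Fin D)) := hcol ▸ hc
    have hTiff : ∀ v w, T.Adj v w ↔ (sumG (G.adjOn {i, j}) (K.adjOn {i, j})).Adj v w := by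
      intro v w
      constructor
      · rintro ⟨(⟨e', hne⟩ | (⟨f', hnf⟩ | bb)), hcx, (⟨hv, hw⟩ | ⟨hw, hv⟩)⟩ <;>
          erw [Equiv.symm_apply_eq] at hv hw <;> subst hv <;> subst hw
        · exact sumG_adj_ll.mpr ⟨e', hcx, Or.inl ⟨rfl, rfl⟩⟩
        · exact (sumG (G.adjOn {i, j}) (K.adjOn {i, j})).adj_symm
            (sumG_adj_ll.mpr ⟨e', hcx, Or.inl ⟨rfl, rfl⟩⟩)
        · exact sumG_adj_rr.mpr ⟨f', hcx, Or.inl ⟨rfl, rfl⟩⟩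
        · exact (sumG (G.adjOn {i, j}) (K.adjOn {i, j})).adj_symm
            (sumG_adj_rr.mpr ⟨f', hcx, Or.inl ⟨rfl, rfl⟩⟩)
        · exact absurd hcx hc
        · exact absurd hcx hc
      · intro hS
        rcases v with u | u <;> rcases w with u' | u'
        · obtain ⟨e', hce', (⟨rfl, rfl⟩ | ⟨rfl, rfl⟩)⟩ := hS
          · exact ⟨Sum.inl ⟨e', fun h => hc (h ▸ hce')⟩, hce', Or.inl ⟨rfl, rfl⟩⟩
          · exact ⟨Sum.inl ⟨e', fun h => hc (h ▸ hce')⟩, hce', Or.inr ⟨rfl, rfl⟩⟩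
        · exact absurd hS sumG_adj_lr
        · exact absurd hS sumG_adj_rl
        · obtain ⟨f', hcf', (⟨rfl, rfl⟩ | ⟨rfl, rfl⟩)⟩ := hS
          · exact ⟨Sum.inr (Sum.inl ⟨f', fun h => hcf (h ▸ hcf')⟩), hcf', Or.inl ⟨rfl, rfl⟩⟩
          · exact ⟨Sum.inr (Sum.inl ⟨f', fun h => hcf (h ▸ hcf')⟩), hcf', Or.inr ⟨rfl, rfl⟩⟩
    have : Nat.card T.ConnectedComponent
        = Nat.card (sumG (G.adjOn {i, j}) (K.adjOn {i, j})).ConnectedComponent :=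
      card_cc_of_iso (Equiv.refl _) hTiff
    rw [if_neg hc, hfT, this, card_cc_sumG]
    rfl

end PreGraph


lemma cycle_pair_count {n : ℕ} (σ : Equiv.Perm (Fin (n+1))) (hσ : σ.IsCycle)
    (hsupp : σ.support = Finset.univ) (c : Fin (n+1)) :
    (∑ q ∈ Finset.range (n+1),
      if c ∈ ({(σ ^ q) 0, (σ ^ (q+1)) 0} : Set (Fin (n+1))) then 1 else 0) = 2 := by
  classical
  have horder : orderOf σ = n + 1 := by
    rw [hσ.orderOf, hsupp]
    simp
  have hpow : σ ^ (n+1) = 1 := by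
    have := pow_orderOf_eq_one σ
    rwa [horder] at this
  have hmove : ∀ x : Fin (n+1), σ x ≠ x := fun x =>
    Equiv.Perm.mem_support.mp (by rw [hsupp]; exact Finset.mem_univ x)
  have hn1 : 1 ≤ n := by
    have h2 := hσ.two_le_card_support
    rw [hsupp] at h2
    simp only [Finset.card_univ, Fintype.card_fin] at h2
    omega
  have key : ∀ q q', q ≤ q' → q' - q ≤ n → (σ ^ q) 0 = (σ ^ q') 0 → q = q' := by
    intro q q' hle hdiff hEq
    have hstep : (σ ^ (q' - q)) ((σ ^ q) 0) = (σ ^ q') 0 := by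
      rw [← Equiv.Perm.mul_apply, ← pow_add, Nat.sub_add_cancel hle]
    rw [← hEq] at hstep
    have hone : σ ^ (q' - q) = 1 := (hσ.pow_eq_one_iff' (hmove ((σ ^ q) 0))).mpr hstep
    have hdvd : orderOf σ ∣ q' - q := orderOf_dvd_of_pow_eq_one hone
    rw [horder] at hdvd
    have := Nat.eq_zero_of_dvd_of_lt hdvd
    omega
  have hinj : ∀ q q', q ≤ n → q' ≤ n → (σ ^ q) 0 = (σ ^ q') 0 → q = q' := by
    intro q q' hq hq' hEq
    rcases le_total q q' with h | h
    · exact key q q' h (by omega) hEq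
    · exact (key q' q h (by omega) hEq.symm).symm
  have hinj' : ∀ a b, 1 ≤ a → a ≤ n+1 → 1 ≤ b → b ≤ n+1 → (σ ^ a) 0 = (σ ^ b) 0 → a = b := by
    intro a b ha1 ha2 hb1 hb2 hEq
    rcases le_total a b with h | h
    · exact key a b h (by omega) hEq
    · exact (key b a h (by omega) hEq.symm).symm
  have hex : ∃ q, q ≤ n ∧ (σ ^ q) 0 = c := by
    obtain ⟨i, hi⟩ := hσ.exists_pow_eq (hmove 0) (hmove c)
    have h2 := pow_mod_orderOf (x := σ) (n := i)
    rw [horder] at h2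
    refine ⟨i % (n+1), Nat.lt_succ_iff.mp (Nat.mod_lt _ (Nat.succ_pos n)), ?_⟩
    rw [h2]
    exact hi
  obtain ⟨q₁, hq₁le, hq₁⟩ := hex
  set q₂ : ℕ := if q₁ = 0 then n else q₁ - 1 with hq₂def
  have hq₂le : q₂ ≤ n := by rw [hq₂def]; split_ifs <;> omega
  have hq₂ : (σ ^ (q₂ + 1)) 0 = c := by
    by_cases h0 : q₁ = 0
    · rw [hq₂def, if_pos h0, hpow]
      rw [← hq₁, h0, pow_zero]
    · rw [hq₂def, if_neg h0, Nat.sub_add_cancel (by omega)]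
      exact hq₁
  have hq₁q₂ : q₁ ≠ q₂ := by
    intro hEq
    have h1 : (σ ^ (q₂ + 1)) 0 = (σ ^ q₂) 0 := by rw [hq₂, ← hEq, hq₁]
    rw [pow_succ', Equiv.Perm.mul_apply] at h1
    exact hmove _ h1
  rw [← Finset.card_filter]
  have hfilter : (Finset.range (n+1)).filter
      (fun q => c ∈ ({(σ ^ q) 0, (σ ^ (q+1)) 0} : Set (Fin (n+1)))) = {q₁, q₂} := by
    ext q
    simp only [Finset.mem_filter, Finset.mem_range, Set.mem_insert_iff, Set.mem_singleton_iff,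
      Finset.mem_insert, Finset.mem_singleton]
    constructor
    · rintro ⟨hqlt, hcq | hcq⟩
      · exact Or.inl (hinj q q₁ (by omega) hq₁le (by rw [hq₁, ← hcq]))
      · right
        have : q + 1 = q₂ + 1 :=
          hinj' (q+1) (q₂+1) (by omega) (by omega) (by omega) (by omega)
            (by rw [hq₂, ← hcq])
        omega
    · rintro (rfl | rfl)
      · exact ⟨by omega, Or.inl hq₁.symm⟩
      · exact ⟨by omega, Or.inr hq₂.symm⟩
  rw [hfilter, Finset.card_insert_of_notMem (by simp [hq₁q₂]), Finset.card_singleton]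

namespace PreGraph

lemma jacketFaces_connSum {D : ℕ} (G K : PreGraph (D+1)) (hGreg : G.Regular)
    (hKreg : K.Regular) (e : G.E) (f : K.E) (hcol : G.col e = K.col f)
    (σ : Equiv.Perm (Fin (D+1))) (hσc : σ.IsCycle) (hsupp : σ.support = Finset.univ) :
    (connSum G K e f).jacketFaces σ + 2 = G.jacketFaces σ + K.jacketFaces σ := by
  classical
  have hmove : ∀ x : Fin (D+1), σ x ≠ x := fun x =>
    Equiv.Perm.mem_support.mp (by rw [hsupp]; exact Finset.mem_univ x)
  have hpair : ∀ q : ℕ, (σ ^ q) 0 ≠ (σ ^ (q+1)) 0 := by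
    intro q h
    rw [pow_succ', Equiv.Perm.mul_apply] at h
    exact hmove _ h.symm
  have hface : ∀ q : ℕ,
      (connSum G K e f).facesCount ((σ ^ q) 0) ((σ ^ (q+1)) 0)
          + (if G.col e ∈ ({(σ ^ q) 0, (σ ^ (q+1)) 0} : Set (Fin (D+1))) then 1 else 0)
        = G.facesCount ((σ ^ q) 0) ((σ ^ (q+1)) 0)
          + K.facesCount ((σ ^ q) 0) ((σ ^ (q+1)) 0) :=
    fun q => facesCount_connSum G K hGreg hKreg e f hcol _ _ (hpair q)
  unfold jacketFaces
  rw [← cycle_pair_count σ hσc hsupp (G.col e), ← Finset.sum_add_distrib,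
    Finset.sum_congr rfl (fun q _ => hface q), Finset.sum_add_distrib]

lemma card_E_connSum {D : ℕ} (G K : PreGraph D) (e : G.E) (f : K.E) :
    Nat.card (connSum G K e f).E = Nat.card G.E + Nat.card K.E := by
  classical
  haveI := Fintype.ofFinite G.E
  haveI := Fintype.ofFinite K.E
  have h1 : Nat.card G.E = Nat.card {e' : G.E // e' ≠ e} + 1 := by
    rw [← Nat.card_congr (Equiv.optionSubtypeNe e)]
    haveI := Fintype.ofFinite {e' : G.E // e' ≠ e}
    simp [Nat.card_eq_fintype_card]
  have h2 : Nat.card K.E = Nat.card {f' : K.E // f' ≠ f} + 1 := by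
    rw [← Nat.card_congr (Equiv.optionSubtypeNe f)]
    haveI := Fintype.ofFinite {f' : K.E // f' ≠ f}
    simp [Nat.card_eq_fintype_card]
  have h3 : Nat.card (connSum G K e f).E
      = Nat.card {e' : G.E // e' ≠ e} + (Nat.card {f' : K.E // f' ≠ f} + Nat.card Bool) := by
    rw [show (connSum G K e f).E = ({e' : G.E // e' ≠ e} ⊕ ({f' : K.E // f' ≠ f} ⊕ Bool))
      from rfl, Nat.card_sum, Nat.card_sum]
  have h4 : Nat.card Bool = 2 := by simp [Nat.card_eq_fintype_card]
  omega

end PreGraph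

end AuxGurau

/-- Gurău's degree is additive under the connected sum along two edges
of the same color: `ω(G #_{e,f} K) = ω(G) + ω(K)`. -/
theorem gurauDegree_connSum (D : ℕ) (G K : PreGraph (D+1))
    (hGreg : G.Regular) (hKreg : K.Regular)
    (hGconn : G.Connected) (hKconn : K.Connected)
    (e : G.E) (f : K.E) (hcol : G.col e = K.col f) :
    (connSum G K e f).gurauDegree = G.gurauDegree + K.gurauDegree := by
  classical
  have hW : Nat.card (connSum G K e f).W = Nat.card G.W + Nat.card K.W := Nat.card_sum
  have hB : Nat.card (connSum G K e f).B = Nat.card G.B + Nat.card K.B := Nat.card_sum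
  have hE := PreGraph.card_E_connSum G K e f
  have hgenus : ∀ σ ∈ Finset.univ.filter
      (fun σ : Equiv.Perm (Fin (D+1)) => σ.IsCycle ∧ σ.support = Finset.univ),
      (connSum G K e f).jacketGenus σ = G.jacketGenus σ + K.jacketGenus σ := by
    intro σ hσ
    rw [Finset.mem_filter] at hσ
    obtain ⟨-, hσc, hsupp⟩ := hσ
    have hjf := PreGraph.jacketFaces_connSum G K hGreg hKreg e f hcol σ hσc hsupp
    have hjfq : ((connSum G K e f).jacketFaces σ : ℚ) + 2
        = (G.jacketFaces σ : ℚ) + (K.jacketFaces σ : ℚ) := by exact_mod_cast hjf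
    unfold PreGraph.jacketGenus
    rw [hW, hB, hE]
    push_cast
    linarith
  unfold PreGraph.gurauDegree
  rw [Finset.sum_congr rfl hgenus, Finset.sum_add_distrib]
  ring
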